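/- For the depolarizing channel N(ρ) = (1−ε)ρ + ε (Tr ρ) I/d with ε ≤ d/(d+1), the 'do nothing' protocol (no measurement, no correction) achieves average fidelity F̄_DN = 1 − ε(d−1)/d, and this is optimal among all ex-ante/ex-post protocols; for ε ≥ d/(d+1), the discriminate-and-reprepare protocol achieving F̄ = 2/(d+1) is optimal. -/

import Mathlib

open Matrix ComplexOrder

/-- `id_n ⊗ Φ` acting on matrices over `Fin n × Fin d`. -/
noncomputable def applyBlocks {d : ℕ} (n : ℕ)
    (Φ : Matrix (Fin d) (Fin d) ℂ →ₗ[ℂ] Matrix (Fin d) (Fin d) ℂ)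
    (M : Matrix (Fin n × Fin d) (Fin n × Fin d) ℂ) :
    Matrix (Fin n × Fin d) (Fin n × Fin d) ℂ :=
  Matrix.of fun p q => Φ (Matrix.of fun i j => M (p.1, i) (q.1, j)) p.2 q.2

/-- Complete positivity. -/
def IsCP {d : ℕ}
    (Φ : Matrix (Fin d) (Fin d) ℂ →ₗ[ℂ] Matrix (Fin d) (Fin d) ℂ) : Prop :=
  ∀ (n : ℕ) (M : Matrix (Fin n × Fin d) (Fin n × Fin d) ℂ),
    M.PosSemidef → (applyBlocks n Φ M).PosSemidef

/-- Trace preservation. -/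
def IsTP {d : ℕ}
    (Φ : Matrix (Fin d) (Fin d) ℂ →ₗ[ℂ] Matrix (Fin d) (Fin d) ℂ) : Prop :=
  ∀ X, (Φ X).trace = X.trace

/-- An ex-ante/ex-post protocol: a CP instrument `{I_ω}` and TPCP maps `C_ω`. -/
def IsProtocol {d m : ℕ}
    (I C : Fin m → (Matrix (Fin d) (Fin d) ℂ →ₗ[ℂ] Matrix (Fin d) (Fin d) ℂ)) : Prop :=
  (∀ ω, IsCP (I ω)) ∧ (∀ X, ∑ ω, ((I ω) X).trace = X.trace) ∧
    (∀ ω, IsCP (C ω) ∧ IsTP (C ω))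

/-- Average fidelity `F̄ = (d + Σ_ω Tr_HS (C_ω ∘ N ∘ I_ω))/(d(d+1))`. -/
noncomputable def avgFid {d : ℕ}
    (N : Matrix (Fin d) (Fin d) ℂ →ₗ[ℂ] Matrix (Fin d) (Fin d) ℂ) {m : ℕ}
    (I C : Fin m → (Matrix (Fin d) (Fin d) ℂ →ₗ[ℂ] Matrix (Fin d) (Fin d) ℂ)) : ℝ :=
  ((d : ℝ) + ∑ ω, (LinearMap.trace ℂ (Matrix (Fin d) (Fin d) ℂ)
      ((C ω) ∘ₗ N ∘ₗ (I ω))).re) / (d * (d + 1))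

/-- The depolarizing channel `N(ρ) = (1−ε)ρ + (ε/d)(Tr ρ) I`. -/
noncomputable def depol (d : ℕ) (ε : ℝ) :
    Matrix (Fin d) (Fin d) ℂ →ₗ[ℂ] Matrix (Fin d) (Fin d) ℂ :=
  ((1 - ε : ℝ) : ℂ) • LinearMap.id +
    ((ε : ℂ) / d) • (Matrix.traceLinearMap (Fin d) ℂ ℂ).smulRight 1

/-- The discriminate-and-reprepare protocol in the standard basis:
    `I_ω(ρ) = |ω⟩⟨ω| ρ |ω⟩⟨ω|`, `C_ω(ρ) = (Tr ρ)|ω⟩⟨ω|`. -/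
noncomputable def drInstr (d : ℕ) (ω : Fin d) :
    Matrix (Fin d) (Fin d) ℂ →ₗ[ℂ] Matrix (Fin d) (Fin d) ℂ :=
  (LinearMap.mulLeft ℂ (Matrix.single ω ω (1 : ℂ))).comp
    (LinearMap.mulRight ℂ (Matrix.single ω ω (1 : ℂ)))

noncomputable def drCorr (d : ℕ) (ω : Fin d) :
    Matrix (Fin d) (Fin d) ℂ →ₗ[ℂ] Matrix (Fin d) (Fin d) ℂ :=
  (Matrix.traceLinearMap (Fin d) ℂ ℂ).smulRight (Matrix.single ω ω (1 : ℂ))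

namespace Stmt7Aux

variable {d : ℕ}


variable {d : ℕ}

noncomputable abbrev Ebm (a b : Fin d) : Matrix (Fin d) (Fin d) ℂ := Matrix.single a b 1

lemma map_expand (Φ : Matrix (Fin d) (Fin d) ℂ →ₗ[ℂ] Matrix (Fin d) (Fin d) ℂ)
    (X : Matrix (Fin d) (Fin d) ℂ) :
    Φ X = ∑ a, ∑ b, X a b • Φ (Ebm a b) := by
  conv_lhs => rw [matrix_eq_sum_single X]
  rw [map_sum]
  refine Finset.sum_congr rfl fun a _ => ?_
  rw [map_sum]
  refine Finset.sum_congr rfl fun b _ => ?_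
  rw [← _root_.map_smul, smul_single, smul_eq_mul, mul_one]

lemma stdBasis_repr (X : Matrix (Fin d) (Fin d) ℂ) (p : Fin d × Fin d) :
    (Matrix.stdBasis ℂ (Fin d) (Fin d)).repr X p = X p.1 p.2 := by
  classical
  have h : X = ∑ q : Fin d × Fin d, X q.1 q.2 • (Matrix.stdBasis ℂ (Fin d) (Fin d)) q := by
    conv_lhs => rw [matrix_eq_sum_single X]
    rw [← Fintype.sum_prod_type']
    refine Finset.sum_congr rfl fun q _ => ?_
    rw [Matrix.stdBasis_eq_single, smul_single, smul_eq_mul, mul_one]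
  conv_lhs => rw [h]
  rw [map_sum]
  rw [Finsupp.finset_sum_apply]
  simp [Module.Basis.repr_self, Finsupp.single_apply]

lemma trace_formula (Φ : Matrix (Fin d) (Fin d) ℂ →ₗ[ℂ] Matrix (Fin d) (Fin d) ℂ) :
    LinearMap.trace ℂ (Matrix (Fin d) (Fin d) ℂ) Φ = ∑ a, ∑ b, Φ (Ebm a b) a b := by
  classical
  rw [LinearMap.trace_eq_matrix_trace ℂ (Matrix.stdBasis ℂ (Fin d) (Fin d)) Φ, Matrix.trace]
  rw [← Fintype.sum_prod_type']
  refine Finset.sum_congr rfl fun p _ => ?_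
  rw [Matrix.diag_apply, LinearMap.toMatrix_apply, stdBasis_repr]
  rw [show p = (p.1, p.2) from rfl, Matrix.stdBasis_eq_single]



variable {n : Type*} [Fintype n] [DecidableEq n]

lemma stardot (v : n → ℂ) :
    star v ⬝ᵥ v = ((∑ i, Complex.normSq (v i) : ℝ) : ℂ) := by
  rw [dotProduct]
  push_cast
  refine Finset.sum_congr rfl fun i _ => ?_
  rw [Pi.star_apply, Complex.star_def, Complex.normSq_eq_conj_mul_self]

open scoped MatrixOrder in
lemma psd_eq_conjTranspose_mul_self {A : Matrix n n ℂ} (hA : A.PosSemidef) :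
    ∃ B : Matrix n n ℂ, A = Bᴴ * B := by
  obtain ⟨B, hB⟩ := CStarAlgebra.nonneg_iff_eq_star_mul_self.mp hA.nonneg
  exact ⟨B, hB⟩

lemma psd_trace_nonneg {A : Matrix n n ℂ} (hA : A.PosSemidef) :
    0 ≤ A.trace := by
  rw [Matrix.trace]
  refine Finset.sum_nonneg fun p _ => ?_
  have h := hA.dotProduct_mulVec_nonneg (Pi.single p 1)
  simpa [Matrix.mulVec_single, dotProduct, Pi.single_apply, Finset.sum_ite_eq,
    apply_ite] using h

lemma trace_mul_nonneg {A B : Matrix n n ℂ} (hA : A.PosSemidef) (hB : B.PosSemidef) :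
    0 ≤ (A * B).trace := by
  obtain ⟨C, rfl⟩ := psd_eq_conjTranspose_mul_self hB
  rw [← Matrix.mul_assoc, Matrix.trace_mul_cycle]
  exact psd_trace_nonneg (hA.mul_mul_conjTranspose_same C)

lemma trace_real {A : Matrix n n ℂ} (hA : A.PosSemidef) : star A.trace = A.trace := by
  rw [← Matrix.trace_conjTranspose, hA.1]

lemma smul_one_sub_psd {B : Matrix n n ℂ} (hB : B.PosSemidef) :
    (B.trace • (1 : Matrix n n ℂ) - B).PosSemidef := by
  obtain ⟨hherm, -⟩ := id hB
  refine Matrix.PosSemidef.of_dotProduct_mulVec_nonneg ?_ ?_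
  · rw [Matrix.IsHermitian, Matrix.conjTranspose_sub, Matrix.conjTranspose_smul,
      Matrix.conjTranspose_one, hherm, trace_real hB]
  intro x
  obtain ⟨C, rfl⟩ := psd_eq_conjTranspose_mul_self hB
  have h1 : star x ⬝ᵥ (((Cᴴ * C).trace • (1 : Matrix n n ℂ) - Cᴴ * C) *ᵥ x)
      = (Cᴴ * C).trace * (star x ⬝ᵥ x) - star (C *ᵥ x) ⬝ᵥ (C *ᵥ x) := by
    rw [Matrix.sub_mulVec, dotProduct_sub, Matrix.smul_mulVec, Matrix.one_mulVec,
      dotProduct_smul, smul_eq_mul, ← Matrix.mulVec_mulVec, Matrix.dotProduct_mulVec,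
      ← Matrix.star_mulVec]
  rw [h1]
  have h2 : (Cᴴ * C).trace = ((∑ p, ∑ r, Complex.normSq (C r p) : ℝ) : ℂ) := by
    rw [Matrix.trace]
    push_cast
    refine Finset.sum_congr rfl fun p _ => ?_
    rw [Matrix.diag_apply, Matrix.mul_apply]
    refine Finset.sum_congr rfl fun r _ => ?_
    rw [Matrix.conjTranspose_apply, Complex.star_def, Complex.normSq_eq_conj_mul_self]
  rw [h2, stardot, stardot, ← Complex.ofReal_mul, ← Complex.ofReal_sub, Complex.zero_le_real,
    sub_nonneg]
  calc ∑ i, Complex.normSq ((C *ᵥ x) i)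
      ≤ ∑ i, (∑ p, Complex.normSq (C i p)) * (∑ p, Complex.normSq (x p)) := by
        refine Finset.sum_le_sum fun i _ => ?_
        have habs : ‖(C *ᵥ x) i‖ ≤ ∑ p, ‖C i p‖ * ‖x p‖ := by
          refine le_trans (norm_sum_le _ _) ?_
          · exact le_of_eq (Finset.sum_congr rfl fun p _ => norm_mul _ _)
        have h3 : Complex.normSq ((C *ᵥ x) i) ≤ (∑ p, ‖C i p‖ * ‖x p‖)^2 := by
          rw [← Complex.sq_norm]
          exact pow_le_pow_left₀ (norm_nonneg _) habs 2
        refine h3.trans ?_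
        refine le_trans (Finset.sum_mul_sq_le_sq_mul_sq _ _ _) (le_of_eq ?_)
        congr 1 <;> exact Finset.sum_congr rfl fun p _ => (Complex.sq_norm _)
      _ = (∑ p, ∑ r, Complex.normSq (C r p)) * ∑ p, Complex.normSq (x p) := by
        rw [← Finset.sum_mul, Finset.sum_comm]

lemma trace_mul_le_trace {A B : Matrix n n ℂ} (hA : A.PosSemidef) (hB : B.PosSemidef) :
    (A * B).trace ≤ A.trace * B.trace := by
  have h := trace_mul_nonneg hA (smul_one_sub_psd hB)
  rw [Matrix.mul_sub, Matrix.trace_sub, sub_nonneg, Matrix.mul_smul, Matrix.trace_smul,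
    Matrix.mul_one, smul_eq_mul, mul_comm] at h
  exact h




/-- partial transpose on the first factor plus (partial trace)ᵀ ⊗ 1 -/
noncomputable def Mmat (J : Matrix (Fin d × Fin d) (Fin d × Fin d) ℂ) :
    Matrix (Fin d × Fin d) (Fin d × Fin d) ℂ :=
  Matrix.of fun p q => J (q.1, p.2) (p.1, q.2) +
    (if p.2 = q.2 then ∑ t, J (q.1, t) (p.1, t) else 0)

lemma sum_swap3 {α β γ : Type*} [Fintype α] [Fintype β] [Fintype γ]
    (G : α → β → γ → ℂ) :
    ∑ a, ∑ b, ∑ c, G a b c = ∑ c, ∑ a, ∑ b, G a b c := by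
  have h : ∀ a : α, ∑ b, ∑ c, G a b c = ∑ c, ∑ b, G a b c :=
    fun a => Finset.sum_comm
  rw [Finset.sum_congr rfl (fun a _ => h a), Finset.sum_comm]

lemma sum4_swap (F : Fin d → Fin d → Fin d → Fin d → ℂ) :
    ∑ a, ∑ i, ∑ b, ∑ j, F a i b j = ∑ i, ∑ j, ∑ a, ∑ b, F a i b j := by
  rw [Finset.sum_comm]
  refine Finset.sum_congr rfl fun i _ => ?_
  exact sum_swap3 fun a b j => F a i b j

lemma pair_expand (F : (Fin d × Fin d) → (Fin d × Fin d) → ℂ) :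
    ∑ p, ∑ q, F p q = ∑ i, ∑ j, ∑ a, ∑ b, F (a, i) (b, j) := by
  rw [Fintype.sum_prod_type]
  have h : ∀ a i, (∑ q, F (a, i) q) = ∑ b, ∑ j, F (a, i) (b, j) :=
    fun a i => Fintype.sum_prod_type (f := fun q => F (a, i) q)
  rw [Finset.sum_congr rfl fun a _ => Finset.sum_congr rfl fun i _ => h a i]
  exact sum4_swap fun a i b j => F (a, i) (b, j)

lemma split2 {α : Type*} [Fintype α] (f g : α → ℂ) :
    ∑ a, (f a + g a) = ∑ a, f a + ∑ a, g a :=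
  Finset.sum_add_distrib

lemma nonneg_of_two_nonneg {z : ℂ} (h : 0 ≤ 2 * z) : 0 ≤ z := by
  rw [Complex.nonneg_iff] at h ⊢
  constructor
  · have := h.1; simp only [Complex.mul_re, Complex.re_ofNat, Complex.im_ofNat] at this; linarith
  · have := h.2; simp only [Complex.mul_im, Complex.re_ofNat, Complex.im_ofNat] at this; linarith

lemma mmat_rank_one (v : Fin d × Fin d → ℂ) :
    (Mmat (Matrix.of fun p q => star (v p) * v q)).PosSemidef := by
  classical
  refine Matrix.PosSemidef.of_dotProduct_mulVec_nonneg ?_ ?_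
  · ext p q
    have h2 : star (if q.2 = p.2 then ∑ t, star (v (p.1, t)) * v (q.1, t) else 0)
        = if p.2 = q.2 then ∑ t, star (v (q.1, t)) * v (p.1, t) else 0 := by
      by_cases h : p.2 = q.2
      · rw [if_pos h.symm, if_pos h, star_sum]
        exact Finset.sum_congr rfl fun t _ => by rw [star_mul', star_star, mul_comm]
      · rw [if_neg (Ne.symm h), if_neg h, star_zero]
    simp only [Mmat, Matrix.conjTranspose_apply, Matrix.of_apply, star_add, star_mul',
      star_star]
    rw [h2]
    ring
  intro x
  -- expand the quadratic form
  set U : Fin d → Fin d → ℂ := fun j i => ∑ a, v (a, j) * star (x (a, i)) with hU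
  have expand : star x ⬝ᵥ ((Mmat (Matrix.of fun p q => star (v p) * v q)) *ᵥ x)
      = (∑ i, ∑ j, U j i * star (U i j)) + (∑ i, ∑ j, U j i * star (U j i)) := by
    simp only [Matrix.mulVec, dotProduct, Mmat, Matrix.of_apply, Pi.star_apply]
    rw [show (∑ p, star (x p) * ∑ q, (star (v (q.1, p.2)) * v (p.1, q.2) +
          (if p.2 = q.2 then ∑ t, star (v (q.1, t)) * v (p.1, t) else 0)) * x q)
        = ∑ p, ∑ q, (star (x p) * ((star (v (q.1, p.2)) * v (p.1, q.2)) * x q)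
            + star (x p) * ((if p.2 = q.2 then ∑ t, star (v (q.1, t)) * v (p.1, t) else 0) * x q))
        from Finset.sum_congr rfl fun p _ => by
          rw [Finset.mul_sum]; exact Finset.sum_congr rfl fun q _ => by ring]
    rw [show (∑ p, ∑ q, (star (x p) * ((star (v (q.1, p.2)) * v (p.1, q.2)) * x q)
            + star (x p) * ((if p.2 = q.2 then ∑ t, star (v (q.1, t)) * v (p.1, t) else 0) * x q)))
        = (∑ p, ∑ q, star (x p) * ((star (v (q.1, p.2)) * v (p.1, q.2)) * x q))
          + (∑ p, ∑ q, star (x p) * ((if p.2 = q.2 then ∑ t, star (v (q.1, t)) * v (p.1, t) else 0) * x q))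
        from by
          rw [show (∑ p, ∑ q, (star (x p) * ((star (v (q.1, p.2)) * v (p.1, q.2)) * x q)
                + star (x p) * ((if p.2 = q.2 then ∑ t, star (v (q.1, t)) * v (p.1, t) else 0) * x q)))
              = ∑ p, ((∑ q, star (x p) * ((star (v (q.1, p.2)) * v (p.1, q.2)) * x q))
                + (∑ q, star (x p) * ((if p.2 = q.2 then ∑ t, star (v (q.1, t)) * v (p.1, t) else 0) * x q)))
            from Finset.sum_congr rfl fun p _ => split2 _ _]
          exact split2 _ _]
    congr 1
    · rw [pair_expand]
      refine Finset.sum_congr rfl fun i _ => Finset.sum_congr rfl fun j _ => ?_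
      rw [hU]
      simp only
      rw [star_sum, Finset.sum_mul_sum]
      refine Finset.sum_congr rfl fun a _ => Finset.sum_congr rfl fun b _ => ?_
      simp only [star_mul', star_star]
      ring
    · rw [pair_expand]
      refine Finset.sum_congr rfl fun i _ => ?_
      rw [show (∑ j, ∑ a, ∑ b, star (x (a, i)) *
            ((if i = j then ∑ t, star (v (b, t)) * v (a, t) else 0) * x (b, j)))
          = ∑ a, ∑ b, star (x (a, i)) * ((∑ t, star (v (b, t)) * v (a, t)) * x (b, i)) from by
        rw [Finset.sum_eq_single i]
        · simp
        · intro j _ hj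
          refine Finset.sum_eq_zero fun a _ => Finset.sum_eq_zero fun b _ => ?_
          rw [if_neg (Ne.symm hj)]; ring
        · intro h; exact absurd (Finset.mem_univ i) h]
      rw [show (∑ j, U j i * star (U j i)) = ∑ t, U t i * star (U t i) from rfl]
      rw [show (∑ a, ∑ b, star (x (a, i)) * ((∑ t, star (v (b, t)) * v (a, t)) * x (b, i)))
          = ∑ t, ∑ a, ∑ b, star (x (a, i)) * (star (v (b, t)) * v (a, t) * x (b, i)) from by
        rw [← sum_swap3 fun a b t => star (x (a, i)) * (star (v (b, t)) * v (a, t) * x (b, i))]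
        refine Finset.sum_congr rfl fun a _ => Finset.sum_congr rfl fun b _ => ?_
        rw [Finset.sum_mul, Finset.mul_sum]]
      refine Finset.sum_congr rfl fun t _ => ?_
      rw [hU]
      simp only
      rw [star_sum, Finset.sum_mul_sum]
      refine Finset.sum_congr rfl fun a _ => Finset.sum_congr rfl fun b _ => ?_
      simp only [star_mul', star_star]
      ring
  rw [expand]
  apply nonneg_of_two_nonneg
  have split : ∀ f g : Fin d → Fin d → ℂ,
      (∑ i, ∑ j, (f i j + g i j)) = (∑ i, ∑ j, f i j) + (∑ i, ∑ j, g i j) := by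
    intro f g
    rw [← Finset.sum_add_distrib]
    exact Finset.sum_congr rfl fun i _ => Finset.sum_add_distrib
  have key : 2 * ((∑ i, ∑ j, U j i * star (U i j)) + (∑ i, ∑ j, U j i * star (U j i)))
      = ∑ i, ∑ j, (U i j + U j i) * star (U i j + U j i) := by
    have e1 : (∑ i, ∑ j, U j i * star (U i j)) = ∑ i, ∑ j, U i j * star (U j i) :=
      Finset.sum_comm
    have e2 : (∑ i, ∑ j, U j i * star (U j i)) = ∑ i, ∑ j, U i j * star (U i j) :=
      Finset.sum_comm
    have rhsexp : (∑ i, ∑ j, (U i j + U j i) * star (U i j + U j i))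
        = ∑ i, ∑ j, (U i j * star (U i j) + (U i j * star (U j i)
            + (U j i * star (U i j) + U j i * star (U j i)))) := by
      refine Finset.sum_congr rfl fun i _ => Finset.sum_congr rfl fun j _ => ?_
      rw [star_add]
      ring
    rw [rhsexp, split, split, split, e1, e2]
    ring
  rw [key]
  refine Finset.sum_nonneg fun i _ => Finset.sum_nonneg fun j _ => ?_
  exact mul_star_self_nonneg _




lemma nonneg_of_two_nonneg' {z : ℂ} (h : 0 ≤ 2 * z) : 0 ≤ z := by
  rw [Complex.nonneg_iff] at h ⊢
  constructor
  · have := h.1; simp only [Complex.mul_re, Complex.re_ofNat, Complex.im_ofNat] at this; linarith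
  · have := h.2; simp only [Complex.mul_im, Complex.re_ofNat, Complex.im_ofNat] at this; linarith

noncomputable def choi (Φ : Matrix (Fin d) (Fin d) ℂ →ₗ[ℂ] Matrix (Fin d) (Fin d) ℂ) :
    Matrix (Fin d × Fin d) (Fin d × Fin d) ℂ :=
  Matrix.of fun p q => Φ (Matrix.single p.1 q.1 1) p.2 q.2

noncomputable def Kmat (C : Matrix (Fin d) (Fin d) ℂ →ₗ[ℂ] Matrix (Fin d) (Fin d) ℂ) :
    Matrix (Fin d × Fin d) (Fin d × Fin d) ℂ :=
  Matrix.of fun p q => star (C (Matrix.single p.2 q.2 1) p.1 q.1)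

noncomputable def ptr2 (A : Matrix (Fin d × Fin d) (Fin d × Fin d) ℂ) :
    Matrix (Fin d) (Fin d) ℂ :=
  Matrix.of fun a b => ∑ t, A (a, t) (b, t)

noncomputable def Smat (d : ℕ) : Matrix (Fin d × Fin d) (Fin d × Fin d) ℂ :=
  Matrix.of fun p q => if q = (p.2, p.1) then 1 else 0

lemma hstar_ite (c : Prop) [Decidable c] :
    star (if c then (1 : ℂ) else 0) = if c then 1 else 0 := by
  split_ifs <;> simp

lemma choi_psd {Φ : Matrix (Fin d) (Fin d) ℂ →ₗ[ℂ] Matrix (Fin d) (Fin d) ℂ}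
    (hΦ : IsCP Φ) : (choi Φ).PosSemidef := by
  classical
  set M₀ : Matrix (Fin d × Fin d) (Fin d × Fin d) ℂ :=
    Matrix.of fun p q => (if p.1 = p.2 then (1 : ℂ) else 0) * (if q.1 = q.2 then 1 else 0)
    with hM₀
  have hpsd : M₀.PosSemidef := by
    refine Matrix.PosSemidef.of_dotProduct_mulVec_nonneg ?_ ?_
    · ext p q
      simp only [hM₀, Matrix.conjTranspose_apply, Matrix.of_apply, star_mul', hstar_ite]
      ring
    · intro x
      have hform : star x ⬝ᵥ (M₀ *ᵥ x)
          = star (∑ q, (if q.1 = q.2 then (1 : ℂ) else 0) * x q)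
            * (∑ q, (if q.1 = q.2 then (1 : ℂ) else 0) * x q) := by
        rw [hM₀, star_sum, Finset.sum_mul_sum]
        simp only [Matrix.mulVec, dotProduct, Matrix.of_apply, Pi.star_apply]
        refine Finset.sum_congr rfl fun p _ => ?_
        rw [Finset.mul_sum]
        refine Finset.sum_congr rfl fun q _ => ?_
        rw [star_mul', hstar_ite]
        ring
      rw [hform]
      exact star_mul_self_nonneg _
  have heq : applyBlocks d Φ M₀ = choi Φ := by
    ext p q
    show Φ (Matrix.of fun i j => M₀ (p.1, i) (q.1, j)) p.2 q.2
        = Φ (Matrix.single p.1 q.1 1) p.2 q.2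
    rw [show (Matrix.of fun i j => M₀ (p.1, i) (q.1, j))
        = Matrix.single p.1 q.1 (1 : ℂ) from by
      ext i j
      rw [hM₀]
      simp only [Matrix.of_apply, Matrix.single]
      split_ifs <;> simp_all]
  have := hΦ d M₀ hpsd
  rwa [heq] at this

lemma choi_herm_apply {Φ : Matrix (Fin d) (Fin d) ℂ →ₗ[ℂ] Matrix (Fin d) (Fin d) ℂ}
    (hΦ : IsCP Φ) (p q : Fin d × Fin d) : star (choi Φ p q) = choi Φ q p := by
  have h := (choi_psd hΦ).1
  have := congrFun (congrFun h q) p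
  rwa [Matrix.conjTranspose_apply] at this

lemma Kmat_psd {C : Matrix (Fin d) (Fin d) ℂ →ₗ[ℂ] Matrix (Fin d) (Fin d) ℂ}
    (hC : IsCP C) : (Kmat C).PosSemidef := by
  have h := ((choi_psd hC).submatrix (fun p : Fin d × Fin d => (p.2, p.1))).transpose
  have heq : ((choi C).submatrix (fun p : Fin d × Fin d => (p.2, p.1))
      (fun p : Fin d × Fin d => (p.2, p.1)))ᵀ = Kmat C := by
    ext p q
    rw [Matrix.transpose_apply, Matrix.submatrix_apply, Kmat]
    rw [show (Matrix.of fun p q : Fin d × Fin d =>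
        star (C (Matrix.single p.2 q.2 1) p.1 q.1)) p q
      = star (C (Matrix.single p.2 q.2 1) p.1 q.1) from rfl]
    rw [← choi_herm_apply hC (p.2, p.1) (q.2, q.1)]
    rfl
  rwa [heq] at h

lemma herm_apply {n : Type*} {A : Matrix n n ℂ} (hA : A.IsHermitian) (p q : n) :
    star (A p q) = A q p := by
  have := congrFun (congrFun hA q) p
  rwa [Matrix.conjTranspose_apply] at this

lemma sum_swap3' {α β γ : Type*} [Fintype α] [Fintype β] [Fintype γ]
    (G : α → β → γ → ℂ) :
    ∑ a, ∑ b, ∑ c, G a b c = ∑ c, ∑ a, ∑ b, G a b c := by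
  have h : ∀ a : α, ∑ b, ∑ c, G a b c = ∑ c, ∑ b, G a b c :=
    fun a => Finset.sum_comm
  rw [Finset.sum_congr rfl (fun a _ => h a), Finset.sum_comm]

lemma ptr2_psd {A : Matrix (Fin d × Fin d) (Fin d × Fin d) ℂ} (hA : A.PosSemidef) :
    (ptr2 A).PosSemidef := by
  classical
  refine Matrix.PosSemidef.of_dotProduct_mulVec_nonneg ?_ ?_
  · ext a b
    rw [Matrix.conjTranspose_apply]
    show star (ptr2 A b a) = ptr2 A a b
    show star (∑ t, A (b, t) (a, t)) = ∑ t, A (a, t) (b, t)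
    rw [star_sum]
    exact Finset.sum_congr rfl fun t _ => herm_apply hA.1 _ _
  · intro x
    have hform : star x ⬝ᵥ (ptr2 A *ᵥ x)
        = ∑ t, ∑ a, ∑ b, star (x a) * (A (a, t) (b, t) * x b) := by
      rw [← sum_swap3' fun a b t => star (x a) * (A (a, t) (b, t) * x b)]
      simp only [Matrix.mulVec, dotProduct, Pi.star_apply, ptr2, Matrix.of_apply]
      refine Finset.sum_congr rfl fun a _ => ?_
      rw [Finset.mul_sum]
      refine Finset.sum_congr rfl fun b _ => ?_
      rw [Finset.sum_mul, Finset.mul_sum]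
    rw [hform]
    refine Finset.sum_nonneg fun t _ => ?_
    have h := hA.dotProduct_mulVec_nonneg (fun p => if p.2 = t then x p.1 else 0)
    have hv : star (fun p : Fin d × Fin d => if p.2 = t then x p.1 else 0) ⬝ᵥ
        (A *ᵥ fun p : Fin d × Fin d => if p.2 = t then x p.1 else 0)
        = ∑ a, ∑ b, star (x a) * (A (a, t) (b, t) * x b) := by
      simp only [Matrix.mulVec, dotProduct, Pi.star_apply]
      rw [Fintype.sum_prod_type]
      rw [show (∑ a, ∑ s, star (if s = t then x a else 0) *
            ∑ q, A (a, s) q * (if q.2 = t then x q.1 else 0))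
          = ∑ a, star (x a) * ∑ q, A (a, t) q * (if q.2 = t then x q.1 else 0) from
        Finset.sum_congr rfl fun a _ => by
          rw [Finset.sum_eq_single t]
          · rw [if_pos rfl]
          · intro s _ hs; rw [if_neg hs, star_zero, zero_mul]
          · intro hmem; exact absurd (Finset.mem_univ t) hmem]
      refine Finset.sum_congr rfl fun a _ => ?_
      rw [Finset.mul_sum]
      rw [show (∑ q : Fin d × Fin d, star (x a) * (A (a, t) q * (if q.2 = t then x q.1 else 0)))
          = ∑ b, ∑ s, star (x a) * (A (a, t) (b, s) * (if s = t then x b else 0)) from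
        Fintype.sum_prod_type (f := fun q : Fin d × Fin d =>
          star (x a) * (A (a, t) q * (if q.2 = t then x q.1 else 0)))]
      refine Finset.sum_congr rfl fun b _ => ?_
      rw [Finset.sum_eq_single t]
      · rw [if_pos rfl]
      · intro s _ hs; rw [if_neg hs, mul_zero, mul_zero]
      · intro hmem; exact absurd (Finset.mem_univ t) hmem
    rwa [hv] at h

lemma ptr2_trace (A : Matrix (Fin d × Fin d) (Fin d × Fin d) ℂ) :
    (ptr2 A).trace = A.trace := by
  rw [Matrix.trace, Matrix.trace, Fintype.sum_prod_type]
  rfl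

lemma one_sub_smat_psd : ((1 : Matrix (Fin d × Fin d) (Fin d × Fin d) ℂ) - Smat d).PosSemidef := by
  classical
  refine Matrix.PosSemidef.of_dotProduct_mulVec_nonneg ?_ ?_
  · ext p q
    simp only [Matrix.conjTranspose_apply, Matrix.sub_apply, star_sub, Smat, Matrix.of_apply,
      Matrix.one_apply, hstar_ite]
    congr 1
    · split_ifs with h1 h2 h3 <;> first | rfl | (exfalso; exact h2 h1.symm) | (exfalso; exact h1 h3.symm)
    · congr 1
      simp only [eq_iff_iff]
      constructor
      · intro h; rw [h]
      · intro h; rw [h]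
  · intro x
    apply nonneg_of_two_nonneg'
    have hform : star x ⬝ᵥ (((1 : Matrix (Fin d × Fin d) (Fin d × Fin d) ℂ) - Smat d) *ᵥ x)
        = (∑ p, star (x p) * x p) - ∑ p : Fin d × Fin d, star (x p) * x (p.2, p.1) := by
      rw [Matrix.sub_mulVec, dotProduct_sub, Matrix.one_mulVec]
      congr 1
      simp only [Matrix.mulVec, dotProduct, Pi.star_apply, Smat, Matrix.of_apply]
      refine Finset.sum_congr rfl fun p _ => ?_
      congr 1
      rw [Finset.sum_eq_single ((p.2, p.1) : Fin d × Fin d)]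
      · rw [if_pos rfl, one_mul]
      · intro q _ hq; rw [if_neg hq, zero_mul]
      · intro hmem; exact absurd (Finset.mem_univ _) hmem
    rw [hform]
    have hswap : ∀ f : (Fin d × Fin d) → ℂ, (∑ p : Fin d × Fin d, f p)
        = ∑ p : Fin d × Fin d, f (p.2, p.1) := by
      intro f
      exact Fintype.sum_equiv (Equiv.prodComm (Fin d) (Fin d)) _ _ (fun p => rfl)
    have key : 2 * ((∑ p, star (x p) * x p) - ∑ p : Fin d × Fin d, star (x p) * x (p.2, p.1))
        = ∑ p : Fin d × Fin d, (x p - x (p.2, p.1)) * star (x p - x (p.2, p.1)) := by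
      have rhsexp : (∑ p : Fin d × Fin d, (x p - x (p.2, p.1)) * star (x p - x (p.2, p.1)))
          = (∑ p : Fin d × Fin d, x p * star (x p))
            + (∑ p : Fin d × Fin d, x (p.2, p.1) * star (x (p.2, p.1)))
            - ((∑ p : Fin d × Fin d, x p * star (x (p.2, p.1)))
              + (∑ p : Fin d × Fin d, x (p.2, p.1) * star (x p))) := by
        rw [← Finset.sum_add_distrib, ← Finset.sum_add_distrib, ← Finset.sum_sub_distrib]
        refine Finset.sum_congr rfl fun p _ => ?_
        rw [star_sub]
        ring
      have t1 : (∑ p : Fin d × Fin d, x p * star (x p)) = ∑ p : Fin d × Fin d, star (x p) * x p :=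
        Finset.sum_congr rfl fun p _ => mul_comm _ _
      have t2 : (∑ p : Fin d × Fin d, x (p.2, p.1) * star (x (p.2, p.1)))
          = ∑ p : Fin d × Fin d, star (x p) * x p := by
        rw [← hswap fun p => x p * star (x p)]
        exact t1
      have t3 : (∑ p : Fin d × Fin d, x p * star (x (p.2, p.1)))
          = ∑ p : Fin d × Fin d, star (x p) * x (p.2, p.1) := by
        rw [hswap fun p => x p * star (x (p.2, p.1))]
        exact Finset.sum_congr rfl fun p _ => mul_comm _ _
      have t4 : (∑ p : Fin d × Fin d, x (p.2, p.1) * star (x p))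
          = ∑ p : Fin d × Fin d, star (x p) * x (p.2, p.1) :=
        Finset.sum_congr rfl fun p _ => mul_comm _ _
      rw [rhsexp, t1, t2, t3, t4]
      ring
    rw [key]
    exact Finset.sum_nonneg fun p _ => mul_star_self_nonneg _




lemma herm_apply' {n : Type*} {A : Matrix n n ℂ} (hA : A.IsHermitian) (p q : n) :
    star (A p q) = A q p := by
  have := congrFun (congrFun hA q) p
  rwa [Matrix.conjTranspose_apply] at this

lemma sum_swap3'' {α β γ : Type*} [Fintype α] [Fintype β] [Fintype γ]
    (G : α → β → γ → ℂ) :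
    ∑ a, ∑ b, ∑ c, G a b c = ∑ c, ∑ a, ∑ b, G a b c := by
  have h : ∀ a : α, ∑ b, ∑ c, G a b c = ∑ c, ∑ b, G a b c :=
    fun a => Finset.sum_comm
  rw [Finset.sum_congr rfl (fun a _ => h a), Finset.sum_comm]

/-- expand a sum over pairs into nested sums with first components outside -/
lemma pair_expand' (F : (Fin d × Fin d) → (Fin d × Fin d) → ℂ) :
    ∑ p, ∑ q, F p q = ∑ a, ∑ b, ∑ x, ∑ y, F (a, x) (b, y) := by
  rw [Fintype.sum_prod_type]
  refine Finset.sum_congr rfl fun a _ => ?_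
  have h : ∀ x, (∑ q, F (a, x) q) = ∑ b, ∑ y, F (a, x) (b, y) :=
    fun x => Fintype.sum_prod_type (f := fun q => F (a, x) q)
  rw [Finset.sum_congr rfl fun x _ => h x]
  exact Finset.sum_comm

lemma one_eq_sum_E :
    (1 : Matrix (Fin d) (Fin d) ℂ) = ∑ x, Matrix.single x x (1 : ℂ) := by
  ext a b
  rw [Matrix.sum_apply]
  simp only [Matrix.single, Matrix.of_apply]
  by_cases h : a = b
  · subst h
    rw [Matrix.one_apply_eq, Finset.sum_eq_single a (fun x _ hx => if_neg (by tauto))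
      (fun hm => absurd (Finset.mem_univ a) hm)]
    exact (if_pos ⟨rfl, rfl⟩).symm
  · rw [Matrix.one_apply_ne h]
    exact (Finset.sum_eq_zero fun x _ => if_neg (by rintro ⟨rfl, rfl⟩; exact h rfl)).symm

lemma map_one_apply (C : Matrix (Fin d) (Fin d) ℂ →ₗ[ℂ] Matrix (Fin d) (Fin d) ℂ)
    (a b : Fin d) :
    C (1 : Matrix (Fin d) (Fin d) ℂ) a b
      = ∑ x, C (Matrix.single x x 1) a b := by
  rw [show (1 : Matrix (Fin d) (Fin d) ℂ) = ∑ x, Matrix.single x x (1 : ℂ) from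
    one_eq_sum_E, map_sum, Matrix.sum_apply]

lemma star_Kmat (C : Matrix (Fin d) (Fin d) ℂ →ₗ[ℂ] Matrix (Fin d) (Fin d) ℂ)
    (p q : Fin d × Fin d) :
    star (Kmat C p q) = C (Matrix.single p.2 q.2 1) p.1 q.1 := by
  show star (star _) = _
  rw [star_star]

lemma trace_JK {C : Matrix (Fin d) (Fin d) ℂ →ₗ[ℂ] Matrix (Fin d) (Fin d) ℂ}
    (hK : (Kmat C).IsHermitian) (J : Matrix (Fin d × Fin d) (Fin d × Fin d) ℂ) :
    (J * Kmat C).trace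
      = ∑ a, ∑ b, ∑ x, ∑ y, J (a, x) (b, y) * C (Matrix.single x y 1) a b := by
  have h1 : (J * Kmat C).trace = ∑ p, ∑ q, J p q * star (Kmat C p q) := by
    rw [Matrix.trace]
    refine Finset.sum_congr rfl fun p _ => ?_
    rw [Matrix.diag_apply, Matrix.mul_apply]
    exact Finset.sum_congr rfl fun q _ => by rw [herm_apply' hK p q]
  rw [h1]
  rw [pair_expand' fun p q => J p q * star (Kmat C p q)]
  refine Finset.sum_congr rfl fun a _ => Finset.sum_congr rfl fun b _ =>
    Finset.sum_congr rfl fun x _ => Finset.sum_congr rfl fun y _ => ?_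
  rw [star_Kmat]

lemma ptr2_Kmat {C : Matrix (Fin d) (Fin d) ℂ →ₗ[ℂ] Matrix (Fin d) (Fin d) ℂ}
    (hptr : (ptr2 (Kmat C)).IsHermitian) (a b : Fin d) :
    ptr2 (Kmat C) b a = C (1 : Matrix (Fin d) (Fin d) ℂ) a b := by
  rw [← herm_apply' hptr a b]
  show star (∑ t, Kmat C (a, t) (b, t)) = _
  rw [star_sum, map_one_apply]
  exact Finset.sum_congr rfl fun t _ => star_Kmat C (a, t) (b, t)

lemma trace_FG {C : Matrix (Fin d) (Fin d) ℂ →ₗ[ℂ] Matrix (Fin d) (Fin d) ℂ}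
    (hptr : (ptr2 (Kmat C)).IsHermitian) (J : Matrix (Fin d × Fin d) (Fin d × Fin d) ℂ) :
    (ptr2 J * ptr2 (Kmat C)).trace
      = ∑ a, ∑ b, ptr2 J a b * C (1 : Matrix (Fin d) (Fin d) ℂ) a b := by
  rw [Matrix.trace]
  refine Finset.sum_congr rfl fun a _ => ?_
  rw [Matrix.diag_apply, Matrix.mul_apply]
  exact Finset.sum_congr rfl fun b _ => by rw [ptr2_Kmat hptr]

lemma choi_apply (I : Matrix (Fin d) (Fin d) ℂ →ₗ[ℂ] Matrix (Fin d) (Fin d) ℂ)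
    (a x b y : Fin d) :
    choi I (a, x) (b, y) = I (Matrix.single a b 1) x y := rfl

lemma ptr2_choi (I : Matrix (Fin d) (Fin d) ℂ →ₗ[ℂ] Matrix (Fin d) (Fin d) ℂ)
    (a b : Fin d) :
    ptr2 (choi I) a b = (I (Matrix.single a b 1)).trace := rfl

lemma depol_apply (ε : ℝ) (X : Matrix (Fin d) (Fin d) ℂ) :
    depol d ε X = ((1 - ε : ℝ) : ℂ) • X + ((ε : ℂ) / d) • (X.trace • (1 : Matrix (Fin d) (Fin d) ℂ)) := by
  simp [depol, Matrix.traceLinearMap]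

lemma map_entry_expand (C : Matrix (Fin d) (Fin d) ℂ →ₗ[ℂ] Matrix (Fin d) (Fin d) ℂ)
    (X : Matrix (Fin d) (Fin d) ℂ) (a b : Fin d) :
    C X a b = ∑ x, ∑ y, X x y * C (Matrix.single x y 1) a b := by
  have h : X = ∑ x, ∑ y, X x y • Matrix.single x y (1 : ℂ) := by
    conv_lhs => rw [matrix_eq_sum_single X]
    refine Finset.sum_congr rfl fun x _ => Finset.sum_congr rfl fun y _ => ?_
    rw [smul_single, smul_eq_mul, mul_one]
  conv_lhs => rw [h]
  rw [map_sum, Matrix.sum_apply]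
  refine Finset.sum_congr rfl fun x _ => ?_
  rw [map_sum, Matrix.sum_apply]
  refine Finset.sum_congr rfl fun y _ => ?_
  rw [_root_.map_smul, Matrix.smul_apply, smul_eq_mul]

lemma E_trace (x : Fin d) : (Matrix.single x x (1 : ℂ)).trace = 1 := by
  rw [Matrix.trace, Finset.sum_eq_single x (fun t _ ht => by
      rw [Matrix.diag_apply]
      exact Matrix.single_apply_of_ne _ _ _ _ _ (by tauto))
    (fun hm => absurd (Finset.mem_univ x) hm)]
  rw [Matrix.diag_apply, Matrix.single_apply_same]

/-- Master identity: the HS trace of `C ∘ depol ∘ I` in terms of Choi matrices. -/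
lemma master {C : Matrix (Fin d) (Fin d) ℂ →ₗ[ℂ] Matrix (Fin d) (Fin d) ℂ}
    (hK : (Kmat C).IsHermitian) (hptr : (ptr2 (Kmat C)).IsHermitian)
    (I : Matrix (Fin d) (Fin d) ℂ →ₗ[ℂ] Matrix (Fin d) (Fin d) ℂ) (ε : ℝ)
    (htr : LinearMap.trace ℂ (Matrix (Fin d) (Fin d) ℂ) (C ∘ₗ depol d ε ∘ₗ I)
      = ∑ a, ∑ b, (C ∘ₗ depol d ε ∘ₗ I) (Matrix.single a b 1) a b) :
    LinearMap.trace ℂ (Matrix (Fin d) (Fin d) ℂ) (C ∘ₗ depol d ε ∘ₗ I)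
      = ((1 - ε : ℝ) : ℂ) * (choi I * Kmat C).trace
        + ((ε : ℂ) / d) * (ptr2 (choi I) * ptr2 (Kmat C)).trace := by
  rw [htr, trace_JK hK, trace_FG hptr]
  rw [Finset.mul_sum, Finset.mul_sum, ← Finset.sum_add_distrib]
  refine Finset.sum_congr rfl fun a _ => ?_
  rw [Finset.mul_sum, Finset.mul_sum, ← Finset.sum_add_distrib]
  refine Finset.sum_congr rfl fun b _ => ?_
  rw [LinearMap.comp_apply, LinearMap.comp_apply, depol_apply, map_add, _root_.map_smul,
    _root_.map_smul, _root_.map_smul, Matrix.add_apply, Matrix.smul_apply, Matrix.smul_apply,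
    Matrix.smul_apply, smul_eq_mul, smul_eq_mul, smul_eq_mul]
  congr 1
  rw [map_entry_expand C (I (Matrix.single a b 1)) a b]
  rfl

/-- trace of `Z * S` -/
lemma trace_ZS {C : Matrix (Fin d) (Fin d) ℂ →ₗ[ℂ] Matrix (Fin d) (Fin d) ℂ}
    (J : Matrix (Fin d × Fin d) (Fin d × Fin d) ℂ) :
    ((applyBlocks d C (Mmat J)) * Smat d).trace
      = (∑ a, ∑ b, ∑ x, ∑ y, J (a, x) (b, y) * C (Matrix.single x y 1) a b)
        + ∑ a, ∑ b, ptr2 J a b * C (1 : Matrix (Fin d) (Fin d) ℂ) a b := by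
  classical
  have hS : ∀ p q : Fin d × Fin d, Smat d q p = if p = (q.2, q.1) then (1 : ℂ) else 0 :=
    fun p q => rfl
  have hdiag : ∀ p : Fin d × Fin d, ((applyBlocks d C (Mmat J)) * Smat d) p p
      = applyBlocks d C (Mmat J) p (p.2, p.1) := by
    intro p
    rw [Matrix.mul_apply]
    rw [Finset.sum_eq_single ((p.2, p.1) : Fin d × Fin d) (fun q _ hq => by
        rw [hS, if_neg (fun hh => hq (by rw [hh])), mul_zero])
      (fun hm => absurd (Finset.mem_univ _) hm)]
    rw [hS, if_pos rfl, mul_one]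
  have hblock : ∀ p : Fin d × Fin d,
      applyBlocks d C (Mmat J) p (p.2, p.1)
        = C (Matrix.of fun i j => J (p.2, i) (p.1, j)) p.2 p.1
          + ptr2 J p.2 p.1 * C (1 : Matrix (Fin d) (Fin d) ℂ) p.2 p.1 := by
    intro p
    have hmat : (Matrix.of fun i j => Mmat J ((p.1, i) : Fin d × Fin d) ((p.2, p.1).1, j))
        = (Matrix.of fun i j => J (p.2, i) (p.1, j))
          + ptr2 J p.2 p.1 • (1 : Matrix (Fin d) (Fin d) ℂ) := by
      ext i j
      have h1 : Mmat J ((p.1, i) : Fin d × Fin d) (p.2, j)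
          = J (p.2, i) (p.1, j) + (if i = j then ∑ t, J (p.2, t) (p.1, t) else 0) := rfl
      have h2 : ((Matrix.of fun i j => J (p.2, i) (p.1, j))
          + ptr2 J p.2 p.1 • (1 : Matrix (Fin d) (Fin d) ℂ)) i j
          = J (p.2, i) (p.1, j) + ptr2 J p.2 p.1 * (if i = j then 1 else 0) := by
        rw [Matrix.add_apply, Matrix.smul_apply, Matrix.one_apply, smul_eq_mul]
        rfl
      show Mmat J ((p.1, i) : Fin d × Fin d) (p.2, j) = _
      rw [h1, h2, mul_ite, mul_one, mul_zero]
      rfl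
    show C (Matrix.of fun i j => Mmat J ((p.1, i) : Fin d × Fin d) ((p.2, p.1).1, j)) p.2 (p.2, p.1).2 = _
    rw [hmat, map_add, _root_.map_smul, Matrix.add_apply, Matrix.smul_apply, smul_eq_mul]
  have hswap : ∀ f : (Fin d × Fin d) → ℂ, (∑ p : Fin d × Fin d, f p)
      = ∑ p : Fin d × Fin d, f (p.2, p.1) :=
    fun f => Fintype.sum_equiv (Equiv.prodComm (Fin d) (Fin d)) _ _ (fun p => rfl)
  calc ((applyBlocks d C (Mmat J)) * Smat d).trace
      = ∑ p : Fin d × Fin d, applyBlocks d C (Mmat J) p (p.2, p.1) :=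
        Finset.sum_congr rfl fun p _ => hdiag p
    _ = ∑ p : Fin d × Fin d, (C (Matrix.of fun i j => J (p.2, i) (p.1, j)) p.2 p.1
          + ptr2 J p.2 p.1 * C (1 : Matrix (Fin d) (Fin d) ℂ) p.2 p.1) :=
        Finset.sum_congr rfl fun p _ => hblock p
    _ = (∑ p : Fin d × Fin d, C (Matrix.of fun i j => J (p.2, i) (p.1, j)) p.2 p.1)
          + ∑ p : Fin d × Fin d, ptr2 J p.2 p.1 * C (1 : Matrix (Fin d) (Fin d) ℂ) p.2 p.1 :=
        Finset.sum_add_distrib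
  have hA : (∑ p : Fin d × Fin d, C (Matrix.of fun i j => J (p.2, i) (p.1, j)) p.2 p.1)
      = ∑ a, ∑ b, ∑ x, ∑ y, J (a, x) (b, y) * C (Matrix.single x y 1) a b := by
    rw [← hswap fun p => C (Matrix.of fun i j => J (p.1, i) (p.2, j)) p.1 p.2]
    rw [Fintype.sum_prod_type]
    refine Finset.sum_congr rfl fun a _ => Finset.sum_congr rfl fun b _ => ?_
    exact map_entry_expand C (Matrix.of fun i j => J (a, i) (b, j)) a b
  have hB : (∑ p : Fin d × Fin d, ptr2 J p.2 p.1 * C (1 : Matrix (Fin d) (Fin d) ℂ) p.2 p.1)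
      = ∑ a, ∑ b, ptr2 J a b * C (1 : Matrix (Fin d) (Fin d) ℂ) a b := by
    rw [← hswap fun p => ptr2 J p.1 p.2 * C (1 : Matrix (Fin d) (Fin d) ℂ) p.1 p.2]
    rw [Fintype.sum_prod_type]
  rw [hA, hB]

lemma ptr2_trace' (A : Matrix (Fin d × Fin d) (Fin d × Fin d) ℂ) :
    (ptr2 A).trace = A.trace := by
  rw [Matrix.trace, Matrix.trace, Fintype.sum_prod_type]
  rfl

/-- trace of `Z` -/
lemma trace_Z {C : Matrix (Fin d) (Fin d) ℂ →ₗ[ℂ] Matrix (Fin d) (Fin d) ℂ}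
    (hTP : IsTP C) (J : Matrix (Fin d × Fin d) (Fin d × Fin d) ℂ) :
    (applyBlocks d C (Mmat J)).trace = ((d : ℂ) + 1) * J.trace := by
  classical
  rw [Matrix.trace, Fintype.sum_prod_type]
  have hterm : ∀ a : Fin d, (∑ i, (applyBlocks d C (Mmat J)).diag (a, i))
      = ((d : ℂ) + 1) * ptr2 J a a := by
    intro a
    have h1 : (∑ i, (applyBlocks d C (Mmat J)).diag (a, i))
        = (C (Matrix.of fun i j => Mmat J ((a, i) : Fin d × Fin d) (a, j))).trace := rfl
    rw [h1, hTP]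
    have h2 : (Matrix.of fun i j => Mmat J ((a, i) : Fin d × Fin d) (a, j)).trace
        = ∑ i : Fin d, (J (a, i) (a, i) + ∑ t, J (a, t) (a, t)) := by
      refine Finset.sum_congr rfl fun i _ => ?_
      show Mmat J ((a, i) : Fin d × Fin d) (a, i) = _
      show J (a, i) (a, i) + (if i = i then ∑ t, J (a, t) (a, t) else 0)
          = J (a, i) (a, i) + ∑ t, J (a, t) (a, t)
      rw [if_pos rfl]
    rw [h2, Finset.sum_add_distrib, Finset.sum_const, Finset.card_univ, Fintype.card_fin]
    show ptr2 J a a + (d : ℕ) • (ptr2 J a a) = _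
    rw [nsmul_eq_mul]
    ring
  rw [Finset.sum_congr rfl fun a _ => hterm a, ← Finset.mul_sum]
  congr 1
  rw [← ptr2_trace' J, Matrix.trace]
  rfl

lemma Kmat_trace {C : Matrix (Fin d) (Fin d) ℂ →ₗ[ℂ] Matrix (Fin d) (Fin d) ℂ}
    (hTP : IsTP C) : (Kmat C).trace = (d : ℂ) := by
  have h0 : (Kmat C).trace
      = ∑ a : Fin d, ∑ x : Fin d, star (C (Matrix.single x x 1) a a) := by
    rw [Matrix.trace, Fintype.sum_prod_type]
    rfl
  rw [h0, Finset.sum_comm]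
  have h1 : ∀ x : Fin d, (∑ a, star (C (Matrix.single x x (1 : ℂ)) a a)) = 1 := by
    intro x
    rw [← star_sum]
    have h2 : (∑ a, C (Matrix.single x x (1 : ℂ)) a a)
        = (C (Matrix.single x x 1)).trace := rfl
    rw [h2, hTP, E_trace, star_one]
  rw [Finset.sum_congr rfl fun x _ => h1 x, Finset.sum_const, Finset.card_univ,
    Fintype.card_fin, nsmul_eq_mul, mul_one]

lemma choi_trace (I : Matrix (Fin d) (Fin d) ℂ →ₗ[ℂ] Matrix (Fin d) (Fin d) ℂ) :
    (choi I).trace = ∑ a : Fin d, (I (Matrix.single a a 1)).trace := by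
  rw [Matrix.trace, Fintype.sum_prod_type]
  rfl

set_option maxHeartbeats 1000000 in
lemma mmat_psd {J : Matrix (Fin d × Fin d) (Fin d × Fin d) ℂ} (hJ : J.PosSemidef) :
    (Mmat J).PosSemidef := by
  classical
  obtain ⟨B, hB⟩ := psd_eq_conjTranspose_mul_self hJ
  have hJpq : ∀ p' q', J p' q' = ∑ r, star (B r p') * B r q' := by
    intro p' q'
    rw [hB, Matrix.mul_apply]
    exact Finset.sum_congr rfl fun r _ => by rw [Matrix.conjTranspose_apply]
  have hdecomp : Mmat J
      = ∑ r : Fin d × Fin d, Mmat (Matrix.of fun p q => star (B r p) * B r q) := by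
    ext p q
    rw [Matrix.sum_apply]
    have hterm : ∀ r : Fin d × Fin d, Mmat (Matrix.of fun p q => star (B r p) * B r q) p q
        = star (B r (q.1, p.2)) * B r (p.1, q.2)
          + (if p.2 = q.2 then ∑ t, star (B r (q.1, t)) * B r (p.1, t) else 0) := fun r => rfl
    rw [Finset.sum_congr rfl fun r _ => hterm r, Finset.sum_add_distrib]
    show J (q.1, p.2) (p.1, q.2) + (if p.2 = q.2 then ∑ t, J (q.1, t) (p.1, t) else 0) = _
    congr 1
    · exact hJpq _ _
    · by_cases h : p.2 = q.2
      · simp only [if_pos h]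
        rw [Finset.sum_congr rfl fun t (_ : t ∈ Finset.univ) => hJpq (q.1, t) (p.1, t)]
        exact Finset.sum_comm
      · simp only [if_neg h, Finset.sum_const_zero]
  rw [hdecomp]
  apply Finset.sum_induction _ _ (fun A B hA hB => hA.add hB) Matrix.PosSemidef.zero
  intro r _
  exact mmat_rank_one fun p => B r p



lemma depol_apply' (ε : ℝ) (X : Matrix (Fin d) (Fin d) ℂ) :
    depol d ε X = ((1 - ε : ℝ) : ℂ) • X
      + ((ε : ℂ) / d) • (X.trace • (1 : Matrix (Fin d) (Fin d) ℂ)) := by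
  simp [depol, Matrix.traceLinearMap]

lemma depol_trace (hd : (d : ℂ) ≠ 0) (ε : ℝ) (X : Matrix (Fin d) (Fin d) ℂ) :
    (depol d ε X).trace = X.trace := by
  rw [depol_apply', Matrix.trace_add, Matrix.trace_smul, Matrix.trace_smul, Matrix.trace_smul,
    Matrix.trace_one, Fintype.card_fin, smul_eq_mul, smul_eq_mul, smul_eq_mul]
  field_simp
  push_cast
  ring

lemma re_sum' {m : ℕ} (f : Fin m → ℂ) : (∑ ω, f ω).re = ∑ ω, (f ω).re :=
  by rw [Complex.re_sum]

lemma dn_term (hd : (d : ℂ) ≠ 0) (ε : ℝ) (a b : Fin d) :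
    depol d ε (Matrix.single a b 1) a b
      = ((1 - ε : ℝ) : ℂ) + (ε : ℂ) / d * (if a = b then 1 else 0) := by
  rw [depol_apply', Matrix.add_apply, Matrix.smul_apply, Matrix.smul_apply, Matrix.smul_apply,
    Matrix.single_apply_same, Matrix.one_apply, smul_eq_mul, smul_eq_mul, smul_eq_mul]
  by_cases h : a = b
  · subst h
    rw [E_trace, if_pos rfl]
    ring
  · rw [Matrix.trace_single_eq_of_ne (h := h), if_neg h]
    ring

lemma dr_term (hd : (d : ℂ) ≠ 0) (ε : ℝ) (ω : Fin d) (a b : Fin d) :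
    (drCorr d ω ∘ₗ depol d ε ∘ₗ drInstr d ω) (Matrix.single a b 1) a b
      = (if a = ω ∧ b = ω then 1 else 0) := by
  rw [LinearMap.comp_apply, LinearMap.comp_apply]
  have h1 : drInstr d ω (Matrix.single a b 1)
      = if a = ω ∧ b = ω then Matrix.single ω ω (1 : ℂ) else 0 := by
    show Matrix.single ω ω (1 : ℂ) * (Matrix.single a b 1 * Matrix.single ω ω (1 : ℂ)) = _
    by_cases hb : b = ω
    · rw [hb]
      rw [Matrix.single_mul_single_same, mul_one]
      by_cases ha : a = ω
      · rw [ha, Matrix.single_mul_single_same, one_mul, if_pos ⟨rfl, rfl⟩]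
      · rw [Matrix.single_mul_single_of_ne (h := Ne.symm ha), if_neg (by tauto)]
    · rw [Matrix.single_mul_single_of_ne (h := hb), Matrix.mul_zero,
        if_neg (by tauto)]
  rw [h1]
  show ((depol d ε (if a = ω ∧ b = ω then Matrix.single ω ω (1 : ℂ) else 0)).trace
      • Matrix.single ω ω (1 : ℂ)) a b = _
  by_cases h : a = ω ∧ b = ω
  · obtain ⟨rfl, rfl⟩ := h
    rw [if_pos ⟨rfl, rfl⟩, depol_trace hd, E_trace, one_smul, if_pos ⟨rfl, rfl⟩,
      Matrix.single_apply_same]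
  · rw [if_neg h, map_zero, Matrix.trace_zero, zero_smul, if_neg h]
    rfl


lemma cre_le {z w : ℂ} (h : z ≤ w) : z.re ≤ w.re := (Complex.le_def.mp h).1

lemma cre_nonneg {z : ℂ} (h : 0 ≤ z) : 0 ≤ z.re := by
  have := (Complex.le_def.mp h).1
  simpa using this

lemma sum_choi_trace {m : ℕ}
    (I : Fin m → (Matrix (Fin d) (Fin d) ℂ →ₗ[ℂ] Matrix (Fin d) (Fin d) ℂ))
    (hI : ∀ X, ∑ ω, ((I ω) X).trace = X.trace) :
    ∑ ω, (choi (I ω)).trace = (d : ℂ) := by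
  rw [Finset.sum_congr rfl fun ω (_ : ω ∈ Finset.univ) => choi_trace (I ω), Finset.sum_comm]
  rw [Finset.sum_congr rfl fun a (_ : a ∈ Finset.univ) => hI (Matrix.single a a 1)]
  rw [Finset.sum_congr rfl fun a (_ : a ∈ Finset.univ) => E_trace a]
  simp

lemma protocol_bound {d : ℕ} (ε : ℝ) {m : ℕ}
    (I C : Fin m → (Matrix (Fin d) (Fin d) ℂ →ₗ[ℂ] Matrix (Fin d) (Fin d) ℂ))
    (hP : IsProtocol I C) :
    ∃ p q f : Fin m → ℝ,
      (∀ ω, 0 ≤ p ω) ∧ (∀ ω, 0 ≤ q ω) ∧ (∀ ω, 0 ≤ f ω) ∧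
      (∀ ω, p ω ≤ d * f ω) ∧ (∀ ω, q ω ≤ d * f ω) ∧
      (∀ ω, p ω + q ω ≤ ((d : ℝ) + 1) * f ω) ∧ (∑ ω, f ω = d) ∧
      (∀ ω, (LinearMap.trace ℂ (Matrix (Fin d) (Fin d) ℂ) (C ω ∘ₗ depol d ε ∘ₗ I ω)).re
          = (1 - ε) * p ω + ε / (d : ℝ) * q ω) := by
  obtain ⟨hIcp, hItr, hCb⟩ := hP
  refine ⟨fun ω => ((choi (I ω) * Kmat (C ω)).trace).re,
    fun ω => ((ptr2 (choi (I ω)) * ptr2 (Kmat (C ω))).trace).re,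
    fun ω => ((choi (I ω)).trace).re, ?_, ?_, ?_, ?_, ?_, ?_, ?_, ?_⟩
  · intro ω
    exact cre_nonneg (trace_mul_nonneg (choi_psd (hIcp ω)) (Kmat_psd (hCb ω).1))
  · intro ω
    exact cre_nonneg (trace_mul_nonneg (ptr2_psd (choi_psd (hIcp ω)))
      (ptr2_psd (Kmat_psd (hCb ω).1)))
  · intro ω
    exact cre_nonneg (psd_trace_nonneg (choi_psd (hIcp ω)))
  · intro ω
    have h := trace_mul_le_trace (choi_psd (hIcp ω)) (Kmat_psd (hCb ω).1)
    rw [Kmat_trace (hCb ω).2, mul_comm] at h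
    rw [show ((d : ℕ) : ℂ) = (((d : ℕ) : ℝ) : ℂ) from (Complex.ofReal_natCast d).symm] at h
    have h2 := cre_le h
    rw [Complex.re_ofReal_mul] at h2
    exact h2
  · intro ω
    have h := trace_mul_le_trace (ptr2_psd (choi_psd (hIcp ω))) (ptr2_psd (Kmat_psd (hCb ω).1))
    rw [ptr2_trace' (choi (I ω)), ptr2_trace' (Kmat (C ω)), Kmat_trace (hCb ω).2,
      mul_comm] at h
    rw [show ((d : ℕ) : ℂ) = (((d : ℕ) : ℝ) : ℂ) from (Complex.ofReal_natCast d).symm] at h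
    have h2 := cre_le h
    rw [Complex.re_ofReal_mul] at h2
    exact h2
  · intro ω
    have hJ := choi_psd (hIcp ω)
    have hZ : (applyBlocks d (C ω) (Mmat (choi (I ω)))).PosSemidef :=
      (hCb ω).1 d _ (mmat_psd hJ)
    have h0 := trace_mul_nonneg hZ one_sub_smat_psd
    rw [Matrix.mul_sub, Matrix.mul_one, Matrix.trace_sub, sub_nonneg] at h0
    rw [trace_Z (hCb ω).2, trace_ZS] at h0
    rw [← trace_JK (Kmat_psd (hCb ω).1).1 (choi (I ω)),
      ← trace_FG (ptr2_psd (Kmat_psd (hCb ω).1)).1 (choi (I ω))] at h0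
    rw [show ((d : ℕ) : ℂ) + 1 = ((((d : ℕ) : ℝ) + 1 : ℝ) : ℂ) from by push_cast; ring] at h0
    have h2 := cre_le h0
    rw [Complex.add_re, Complex.re_ofReal_mul] at h2
    exact h2
  · have h := sum_choi_trace I hItr
    have h2 := congrArg Complex.re h
    rw [re_sum'] at h2
    simpa using h2
  · intro ω
    have hm := master (Kmat_psd (hCb ω).1).1 (ptr2_psd (Kmat_psd (hCb ω).1)).1 (I ω) ε
      (trace_formula _)
    rw [hm]
    rw [show ((ε : ℂ) / (d : ℕ)) = ((ε / ((d : ℕ) : ℝ) : ℝ) : ℂ) from by push_cast; ring]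
    rw [Complex.add_re, Complex.re_ofReal_mul, Complex.re_ofReal_mul]

end Stmt7Aux

open Stmt7Aux in
/-- optimal suppression of the depolarizing noise.
    (i) For `ε ≤ d/(d+1)` the do-nothing protocol (one outcome, `I = C = id`)
    achieves average fidelity `1 − ε(d−1)/d`, optimally.
    (ii) For `ε ≥ d/(d+1)` every protocol has average fidelity at most
    `2/(d+1)`, and some protocol attains it. -/
theorem stmt7 (d : ℕ) (hd : 1 ≤ d) (ε : ℝ) (hε0 : 0 ≤ ε) (hε1 : ε ≤ 1) :
    (ε ≤ (d : ℝ) / (d + 1) →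
      avgFid (depol d ε) (fun _ : Fin 1 => LinearMap.id) (fun _ => LinearMap.id)
          = 1 - ε * (d - 1) / d ∧
      ∀ (m : ℕ) (I C : Fin m → (Matrix (Fin d) (Fin d) ℂ →ₗ[ℂ] Matrix (Fin d) (Fin d) ℂ)),
        IsProtocol I C → avgFid (depol d ε) I C ≤ 1 - ε * (d - 1) / d) ∧
    ((d : ℝ) / (d + 1) ≤ ε →
      (∀ (m : ℕ) (I C : Fin m → (Matrix (Fin d) (Fin d) ℂ →ₗ[ℂ] Matrix (Fin d) (Fin d) ℂ)),
        IsProtocol I C → avgFid (depol d ε) I C ≤ 2 / ((d : ℝ) + 1)) ∧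
      avgFid (depol d ε) (drInstr d) (drCorr d) = 2 / ((d : ℝ) + 1)) := by
  classical
  have hd0 : (0 : ℝ) < d := by exact_mod_cast hd
  have hdC : (d : ℂ) ≠ 0 := Nat.cast_ne_zero.mpr (Nat.one_le_iff_ne_zero.mp hd)
  have hd1 : (0 : ℝ) < (d : ℝ) + 1 := by linarith
  have hdne : ((d : ℝ)) ≠ 0 := ne_of_gt hd0
  have hd1ne : ((d : ℝ) + 1) ≠ 0 := ne_of_gt hd1
  -- do-nothing fidelity
  have hDN : avgFid (depol d ε) (fun _ : Fin 1 => LinearMap.id) (fun _ => LinearMap.id)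
      = 1 - ε * ((d : ℝ) - 1) / d := by
    have hcomp : (LinearMap.id ∘ₗ depol d ε ∘ₗ LinearMap.id :
        Matrix (Fin d) (Fin d) ℂ →ₗ[ℂ] Matrix (Fin d) (Fin d) ℂ) = depol d ε := by
      rw [LinearMap.id_comp, LinearMap.comp_id]
    have htr : LinearMap.trace ℂ (Matrix (Fin d) (Fin d) ℂ) (depol d ε)
        = (((1 - ε) * (d : ℝ) ^ 2 + ε : ℝ) : ℂ) := by
      rw [Stmt7Aux.trace_formula]
      rw [Finset.sum_congr rfl fun a (_ : a ∈ Finset.univ) =>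
        Finset.sum_congr rfl fun b (_ : b ∈ Finset.univ) => Stmt7Aux.dn_term hdC ε a b]
      rw [Finset.sum_congr rfl fun a (_ : a ∈ Finset.univ) => Finset.sum_add_distrib,
        Finset.sum_add_distrib]
      have h1 : (∑ _a : Fin d, ∑ _b : Fin d, ((1 - ε : ℝ) : ℂ))
          = ((1 - ε : ℝ) : ℂ) * (d : ℂ) ^ 2 := by
        simp [Finset.sum_const, Finset.card_univ]
        ring
      have h2 : (∑ a : Fin d, ∑ b : Fin d, (ε : ℂ) / (d : ℂ) * (if a = b then 1 else 0))
          = (ε : ℂ) := by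
        have hin : ∀ a : Fin d,
            (∑ b : Fin d, (ε : ℂ) / (d : ℂ) * (if a = b then 1 else 0))
              = (ε : ℂ) / (d : ℂ) := by
          intro a
          rw [Finset.sum_congr rfl fun b (_ : b ∈ Finset.univ) =>
            (by rw [mul_ite, mul_one, mul_zero] :
              (ε : ℂ) / (d : ℂ) * (if a = b then 1 else 0)
                = if a = b then (ε : ℂ) / (d : ℂ) else 0)]
          rw [Finset.sum_ite_eq]
          rw [if_pos (Finset.mem_univ a)]
        rw [Finset.sum_congr rfl fun a (_ : a ∈ Finset.univ) => hin a, Finset.sum_const,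
          Finset.card_univ, Fintype.card_fin, nsmul_eq_mul]
        field_simp
      rw [h1, h2]
      push_cast
      ring
    rw [avgFid]
    rw [Fin.sum_univ_one]
    rw [show ((fun _ : Fin 1 => (LinearMap.id : Matrix (Fin d) (Fin d) ℂ →ₗ[ℂ] _)) 0 ∘ₗ
        depol d ε ∘ₗ (fun _ : Fin 1 => (LinearMap.id : Matrix (Fin d) (Fin d) ℂ →ₗ[ℂ] _)) 0)
        = depol d ε from hcomp]
    rw [htr, Complex.ofReal_re]
    field_simp
    ring
  -- discriminate-and-reprepare fidelity
  have hDR : avgFid (depol d ε) (drInstr d) (drCorr d) = 2 / ((d : ℝ) + 1) := by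
    have htr : ∀ ω : Fin d,
        LinearMap.trace ℂ (Matrix (Fin d) (Fin d) ℂ) (drCorr d ω ∘ₗ depol d ε ∘ₗ drInstr d ω)
          = 1 := by
      intro ω
      rw [Stmt7Aux.trace_formula]
      rw [Finset.sum_congr rfl fun a (_ : a ∈ Finset.univ) =>
        Finset.sum_congr rfl fun b (_ : b ∈ Finset.univ) => Stmt7Aux.dr_term hdC ε ω a b]
      have hin : ∀ a : Fin d,
          (∑ b : Fin d, if a = ω ∧ b = ω then (1 : ℂ) else 0)
            = if a = ω then 1 else 0 := by
        intro a
        by_cases h : a = ω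
        · simp [h]
        · simp [h]
      rw [Finset.sum_congr rfl fun a (_ : a ∈ Finset.univ) => hin a]
      simp
    rw [avgFid]
    rw [Finset.sum_congr rfl fun ω (_ : ω ∈ Finset.univ) => (by rw [htr ω] : (LinearMap.trace ℂ
      (Matrix (Fin d) (Fin d) ℂ) (drCorr d ω ∘ₗ depol d ε ∘ₗ drInstr d ω)).re = (1 : ℂ).re)]
    simp only [Complex.one_re, Finset.sum_const, Finset.card_univ, Fintype.card_fin,
      nsmul_eq_mul, mul_one]
    field_simp
    ring
  refine ⟨?_, ?_⟩
  · -- case ε ≤ d/(d+1)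
    intro hεle
    refine ⟨hDN, ?_⟩
    intro m I C hP
    obtain ⟨p, q, f, hp0, hq0, hf0, hpd, hqd, hpq, hfsum, hre⟩ :=
      Stmt7Aux.protocol_bound ε I C hP
    rw [avgFid, Finset.sum_congr rfl fun ω (_ : ω ∈ Finset.univ) => hre ω]
    have hc2 : 0 ≤ 1 - ε - ε / (d : ℝ) := by
      have h1 : ε * ((d : ℝ) + 1) ≤ d := (le_div_iff₀ hd1).mp hεle
      have h2 : ε / (d : ℝ) * d = ε := div_mul_cancel₀ ε hdne
      nlinarith [h1, h2, hd0]
    have hper : ∀ ω, (1 - ε) * p ω + ε / (d : ℝ) * q ω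
        ≤ (((d : ℝ) ^ 2 - ε * ((d : ℝ) ^ 2 - 1)) / d) * f ω := by
      intro ω
      have e1 : (1 - ε) * p ω + ε / (d : ℝ) * q ω
          = ε / (d : ℝ) * (p ω + q ω) + (1 - ε - ε / (d : ℝ)) * p ω := by ring
      have b1 : ε / (d : ℝ) * (p ω + q ω) ≤ ε / (d : ℝ) * (((d : ℝ) + 1) * f ω) :=
        mul_le_mul_of_nonneg_left (hpq ω) (by positivity)
      have b2 : (1 - ε - ε / (d : ℝ)) * p ω ≤ (1 - ε - ε / (d : ℝ)) * ((d : ℝ) * f ω) :=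
        mul_le_mul_of_nonneg_left (hpd ω) hc2
      have e2 : ε / (d : ℝ) * (((d : ℝ) + 1) * f ω) + (1 - ε - ε / (d : ℝ)) * ((d : ℝ) * f ω)
          = (((d : ℝ) ^ 2 - ε * ((d : ℝ) ^ 2 - 1)) / d) * f ω := by
        field_simp
        ring
      linarith [b1, b2]
    have hsum : (∑ ω, ((1 - ε) * p ω + ε / (d : ℝ) * q ω))
        ≤ (d : ℝ) ^ 2 - ε * ((d : ℝ) ^ 2 - 1) := by
      calc (∑ ω, ((1 - ε) * p ω + ε / (d : ℝ) * q ω))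
          ≤ ∑ ω, ((((d : ℝ) ^ 2 - ε * ((d : ℝ) ^ 2 - 1)) / d) * f ω) :=
            Finset.sum_le_sum fun ω _ => hper ω
        _ = (((d : ℝ) ^ 2 - ε * ((d : ℝ) ^ 2 - 1)) / d) * ∑ ω, f ω := by
            rw [Finset.mul_sum]
        _ = (d : ℝ) ^ 2 - ε * ((d : ℝ) ^ 2 - 1) := by
            rw [hfsum]; field_simp
    have hD : (0 : ℝ) < (d : ℝ) * ((d : ℝ) + 1) := by positivity
    rw [show (1 : ℝ) - ε * ((d : ℝ) - 1) / d
        = ((d : ℝ) + ((d : ℝ) ^ 2 - ε * ((d : ℝ) ^ 2 - 1))) / ((d : ℝ) * ((d : ℝ) + 1)) from by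
      field_simp; ring]
    rw [div_le_div_iff₀ hD hD]
    exact mul_le_mul_of_nonneg_right (by linarith [hsum]) (le_of_lt hD)
  · -- case d/(d+1) ≤ ε
    intro hεge
    constructor
    · intro m I C hP
      obtain ⟨p, q, f, hp0, hq0, hf0, hpd, hqd, hpq, hfsum, hre⟩ :=
        Stmt7Aux.protocol_bound ε I C hP
      rw [avgFid, Finset.sum_congr rfl fun ω (_ : ω ∈ Finset.univ) => hre ω]
      have hc2 : 0 ≤ ε / (d : ℝ) - (1 - ε) := by
        have h1 : (d : ℝ) ≤ ε * ((d : ℝ) + 1) := (div_le_iff₀ hd1).mp hεge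
        have h2 : ε / (d : ℝ) * d = ε := div_mul_cancel₀ ε hdne
        nlinarith [h1, h2, hd0]
      have hper : ∀ ω, (1 - ε) * p ω + ε / (d : ℝ) * q ω ≤ f ω := by
        intro ω
        have e1 : (1 - ε) * p ω + ε / (d : ℝ) * q ω
            = (1 - ε) * (p ω + q ω) + (ε / (d : ℝ) - (1 - ε)) * q ω := by ring
        have b1 : (1 - ε) * (p ω + q ω) ≤ (1 - ε) * (((d : ℝ) + 1) * f ω) :=
          mul_le_mul_of_nonneg_left (hpq ω) (by linarith)
        have b2 : (ε / (d : ℝ) - (1 - ε)) * q ω ≤ (ε / (d : ℝ) - (1 - ε)) * ((d : ℝ) * f ω) :=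
          mul_le_mul_of_nonneg_left (hqd ω) hc2
        have e2 : (1 - ε) * (((d : ℝ) + 1) * f ω) + (ε / (d : ℝ) - (1 - ε)) * ((d : ℝ) * f ω)
            = f ω := by
          field_simp
          ring
        linarith [b1, b2]
      have hsum : (∑ ω, ((1 - ε) * p ω + ε / (d : ℝ) * q ω)) ≤ (d : ℝ) :=
        le_of_le_of_eq (Finset.sum_le_sum fun ω _ => hper ω) hfsum
      have hD : (0 : ℝ) < (d : ℝ) * ((d : ℝ) + 1) := by positivity
      rw [show (2 : ℝ) / ((d : ℝ) + 1)
          = ((d : ℝ) + (d : ℝ)) / ((d : ℝ) * ((d : ℝ) + 1)) from by field_simp; ring]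
      rw [div_le_div_iff₀ hD hD]
      exact mul_le_mul_of_nonneg_right (by linarith [hsum]) (le_of_lt hD)
    · exact hDR
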